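/- (Lemma 3.2) Fix γ > 0. There exists a constant C > 0 depending only on γ — in particular independent of the partition, of the mesh size h, of the interface position α, and of p — such that for every partition with h ≤ 1 and every p as in the context that satisfies the Robin jump condition [p]_α = γ [p']_α, one has (∫_α^b |(Ī_h p − I_h p)'(x)|² dx)^{1/2} ≤ C h (‖p₁''‖_{L²(a,b)} + ‖p₂''‖_{L²(a,b)}), where the derivative is taken on each open subinterval of the partition (excluding the break points). -/

import Mathlib

open Set intervalIntegral

open MeasureTheory

lemma my_affine_eq {c d c' d' u v : ℝ} (huv : u ≠ v) (h1 : c*u+d = c'*u+d')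
    (h2 : c*v+d = c'*v+d') : ∀ t : ℝ, c*t+d = c'*t+d' := by
  intro t
  have h3 : (c - c')*(u - v) = 0 := by nlinarith [h1, h2]
  rcases mul_eq_zero.mp h3 with hc | hc
  · have hcc : c = c' := by linarith
    rw [hcc] at h1 ⊢
    linarith
  · exact absurd (sub_eq_zero.mp hc) huv

lemma my_mono (x : ℕ → ℝ) (n : ℕ) (hx : ∀ i, i < n → x i < x (i+1)) :
    ∀ i j, i ≤ j → j ≤ n → x i ≤ x j := by
  intro i j
  induction j with
  | zero =>
    intro h1 _
    have : i = 0 := by omega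
    rw [this]
  | succ j ih =>
    intro h1 h2
    rcases Nat.lt_or_ge i (j+1) with h | h
    · exact le_trans (ih (by omega) (by omega)) (hx j (by omega)).le
    · have : i = j + 1 := by omega
      rw [this]

lemma my_cover (x : ℕ → ℝ) : ∀ (d n m : ℕ), n = m + d → m < n →
    (∀ i, i < n → x i < x (i+1)) → ∀ t : ℝ, x m ≤ t → t ≤ x n →
    ∃ i, m ≤ i ∧ i < n ∧ x i ≤ t ∧ t ≤ x (i+1)
  | 0, n, m, hnm, hm, _, _, _, _ => by omega
  | d+1, n, m, hnm, hm, hx, t, ht1, ht2 => by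
    by_cases hc : t ≤ x (m+1)
    · exact ⟨m, le_rfl, hm, ht1, hc⟩
    · push_neg at hc
      have hm1 : m + 1 < n := by
        rcases Nat.lt_or_ge (m+1) n with h | h
        · exact h
        · exfalso
          have : m + 1 = n := by omega
          rw [this] at hc; linarith
      obtain ⟨i, hi1, hi2, hi3, hi4⟩ :=
        my_cover x d n (m+1) (by omega) hm1 hx t hc.le ht2
      exact ⟨i, by omega, hi2, hi3, hi4⟩

lemma my_cs {f : ℝ → ℝ} (hf : Continuous f) {s t : ℝ} (hst : s ≤ t) :
    (∫ u in s..t, |f u|) ≤ Real.sqrt (t - s) * Real.sqrt (∫ u in s..t, f u ^ 2) := by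
  set I := ∫ u in s..t, f u ^ 2 with hI
  set A := ∫ u in s..t, |f u| with hA
  have hI0 : 0 ≤ I := intervalIntegral.integral_nonneg hst (fun u _ => sq_nonneg _)
  have hA0 : 0 ≤ A := intervalIntegral.integral_nonneg hst (fun u _ => abs_nonneg _)
  have key : ∀ ε : ℝ, 0 < ε → 2*ε*A ≤ I + ε^2*(t - s) := by
    intro ε hε
    have h2 : (∫ u in s..t, 2*ε*|f u|) ≤ ∫ u in s..t, (f u^2 + ε^2) := by
      apply intervalIntegral.integral_mono_on hst
        ((continuous_const.mul hf.abs).intervalIntegrable _ _)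
        (((hf.pow 2).add continuous_const).intervalIntegrable _ _)
      intro u _
      show 2*ε*|f u| ≤ f u^2 + ε^2
      nlinarith [sq_nonneg (|f u| - ε), sq_abs (f u)]
    rw [intervalIntegral.integral_const_mul] at h2
    rw [intervalIntegral.integral_add
      ((hf.fun_pow 2).intervalIntegrable _ _)
      (intervalIntegrable_const), intervalIntegral.integral_const] at h2
    simp only [smul_eq_mul] at h2
    nlinarith
  rcases eq_or_lt_of_le hA0 with hA' | hA'
  · rw [← hA']
    positivity
  · have hL : 0 < t - s := by
      rcases eq_or_lt_of_le hst with h | h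
      · exfalso
        have : A = 0 := by rw [hA, ← h, intervalIntegral.integral_same]
        linarith
      · linarith
    have hKey := key (A/(t-s)) (by positivity)
    have hAA : A^2 ≤ (t-s)*I := by
      have h1 : (A/(t-s))^2*(t-s) = A^2/(t-s) := by
        field_simp
      have h2 : 2*(A/(t-s))*A = 2*(A^2/(t-s)) := by
        field_simp
      rw [h1, h2] at hKey
      have h3 : A^2/(t-s) ≤ I := by linarith
      calc A^2 = (A^2/(t-s))*(t-s) := by field_simp
      _ ≤ I*(t-s) := by
        apply mul_le_mul_of_nonneg_right h3 hL.le
      _ = (t-s)*I := by ring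
    have := Real.sqrt_le_sqrt hAA
    rw [Real.sqrt_sq hA0, Real.sqrt_mul hL.le] at this
    exact this

lemma key_alg (γ x0 x1 α t c c₂ cQ dQ δ m₂ q0 qα R J : ℝ)
    (hk : x1 - x0 ≠ 0) (hA : α - x1 ≠ 0) (hAg : α - x1 - γ ≠ 0)
    (hm₂ : m₂ = (α - x0 - γ)*(α - x1)/((x1 - x0)*(α - x1 - γ)))
    (hδ : δ = -(γ*qα)/(α - x1))
    (hcc : (c₂ - c)*(x1 - x0) = -J)
    (hJ : J = γ*qα - R)
    (hdQ : cQ*x0 + dQ = q0) :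
    c₂ - (c + (cQ*(m₂*(t - x1)) + ((cQ*t + dQ) + δ)*m₂))
      = (R - (α - x0)*qα)/(x1 - x0) - m₂*((q0 - qα) + cQ*(t - x0) + cQ*(t - x1)) := by
  subst hm₂ hδ hJ
  have hdQ' : dQ = q0 - cQ*x0 := by linarith
  subst hdQ'
  have hc₂ : c₂ = c + (R - γ*qα)/(x1 - x0) := by
    field_simp
    linarith
  subst hc₂
  field_simp
  ring


set_option maxHeartbeats 1000000 in
/-- **Lemma 3.2.** For each fixed `γ > 0` there is a constant `C > 0`
depending only on `γ` — independent of the partition, mesh size `h`, interface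
position `α`, and of `p` — such that for every `p` (given by `C²` pieces `p₁, p₂`)
satisfying the Robin jump condition `[p]_α = γ [p']_α`, the broken `H¹` seminorm
over `(α,b)` of `Ī_h p - I_h p` is bounded by
`C h (‖p₁''‖_{L²(a,b)} + ‖p₂''‖_{L²(a,b)})`. -/
theorem lemma_3_2_right_interpolation_estimate (γ : ℝ) (hγpos : 0 < γ) :
    ∃ C : ℝ, 0 < C ∧
      ∀ (a b : ℝ) (n : ℕ) (x : ℕ → ℝ) (k : ℕ) (α h : ℝ)
        (p₁ p₂ P P₁ P₂ Q : ℝ → ℝ),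
        a < b → x 0 = a → x n = b →
        (∀ i, i < n → x i < x (i + 1)) →
        (∀ i, i < n → x (i + 1) - x i ≤ h) → h ≤ 1 →
        k + 1 ≤ n → x k < α → α < x (k + 1) →
        ContDiff ℝ 2 p₁ → ContDiff ℝ 2 p₂ →
        -- the Robin jump condition [p]_α = γ [p']_α
        p₂ α - p₁ α = γ * (deriv p₂ α - deriv p₁ α) →
        -- nodal interpolation values (p = p₁ on [a,α), p = p₂ on (α,b])
        (∀ i, i ≤ n → P (x i) = if x i < α then p₁ (x i) else p₂ (x i)) →
        (∀ i, i ≤ n → P₁ (x i) = p₁ (x i)) →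
        (∀ i, i ≤ n → P₂ (x i) = p₂ (x i)) →
        (∀ i, i ≤ n → Q (x i) = deriv p₂ (x i) - deriv p₁ (x i)) →
        -- affine on each element
        (∀ i, i < n → ∃ c d : ℝ, ∀ t ∈ Icc (x i) (x (i + 1)), P t = c * t + d) →
        (∀ i, i < n → ∃ c d : ℝ, ∀ t ∈ Icc (x i) (x (i + 1)), P₁ t = c * t + d) →
        (∀ i, i < n → ∃ c d : ℝ, ∀ t ∈ Icc (x i) (x (i + 1)), P₂ t = c * t + d) →
        (∀ i, i < n → ∃ c d : ℝ, ∀ t ∈ Icc (x i) (x (i + 1)), Q t = c * t + d) →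
        (let m₁ : ℝ := (α - x (k + 1)) / (x (k + 1) - x k)
         let m₂ : ℝ := (α - x k - γ) * (α - x (k + 1)) /
            ((x (k + 1) - x k) * (α - x (k + 1) - γ))
         let ψ : ℝ → ℝ := fun t =>
            if t < x k then 0 else if t < α then m₁ * (t - x k)
            else if t ≤ x (k + 1) then m₂ * (t - x (k + 1)) else 0
         let δ : ℝ := -(p₂ α - p₁ α) / (α - x (k + 1))
         -- the enriched interpolant  I_h p = π_h p + (π_h(p₂'-p₁'))ψ + δψ
         let Ih : ℝ → ℝ := fun t => P t + (Q t + δ) * ψ t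
         -- the broken interpolant  Ī_h p
         let Ibar : ℝ → ℝ := fun t => if t < α then P₁ t else P₂ t
         (∫ t in α..b, (deriv (fun s => Ibar s - Ih s) t) ^ 2) ^ ((1 : ℝ) / 2) ≤
           C * h * ((∫ t in a..b, (deriv (deriv p₁) t) ^ 2) ^ ((1 : ℝ) / 2) +
             (∫ t in a..b, (deriv (deriv p₂) t) ^ 2) ^ ((1 : ℝ) / 2))) := by
  refine ⟨1 + 3*(1+γ)/γ, by positivity, ?_⟩
  intro a b n x k α h p₁ p₂ P P₁ P₂ Q hab hx0 hxn hxlt hxh hh1 hkn hkα hαk hp₁ hp₂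
    hjump hP hP₁ hP₂ hQ hPaff hP₁aff hP₂aff hQaff
  intro m₁ m₂ ψ δ Ih Ibar
  simp only [← Real.sqrt_eq_rpow]
  -- basic facts
  have hkn' : k < n := by omega
  have hkpos : 0 < x (k+1) - x k := sub_pos.mpr (hxlt k hkn')
  have hx0a : a ≤ x k := hx0 ▸ my_mono x n hxlt 0 k (by omega) (by omega)
  have hx1b : x (k+1) ≤ b := hxn ▸ my_mono x n hxlt (k+1) n (by omega) le_rfl
  have hαb : α ≤ b := le_trans hαk.le hx1b
  have hhk : x (k+1) - x k ≤ h := hxh k hkn'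
  have hh0 : 0 < h := lt_of_lt_of_le hkpos hhk
  -- regularity
  have h21 : (2 : WithTop ℕ∞) = 1 + 1 := by norm_num
  have hdp₁ : ContDiff ℝ 1 (deriv p₁) := (contDiff_succ_iff_deriv.mp (h21 ▸ hp₁)).2.2
  have hdp₂ : ContDiff ℝ 1 (deriv p₂) := (contDiff_succ_iff_deriv.mp (h21 ▸ hp₂)).2.2
  set q : ℝ → ℝ := fun u => deriv p₂ u - deriv p₁ u with hqdef
  set f₁ : ℝ → ℝ := fun u => deriv (deriv p₁) u with hf₁def
  set f₂ : ℝ → ℝ := fun u => deriv (deriv p₂) u with hf₂def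
  have hqc : Continuous q := (hdp₂.continuous).sub hdp₁.continuous
  have hf₁c : Continuous f₁ := hdp₁.continuous_deriv le_rfl
  have hf₂c : Continuous f₂ := hdp₂.continuous_deriv le_rfl
  have hdq₁ : Differentiable ℝ (deriv p₁) := hdp₁.differentiable one_ne_zero
  have hdq₂ : Differentiable ℝ (deriv p₂) := hdp₂.differentiable one_ne_zero
  have hderivq : deriv q = fun s => f₂ s - f₁ s :=
    funext fun s => deriv_sub (hdq₂ s) (hdq₁ s)
  set N₁ := Real.sqrt (∫ t in a..b, f₁ t ^ 2) with hN₁def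
  set N₂ := Real.sqrt (∫ t in a..b, f₂ t ^ 2) with hN₂def
  set N := N₁ + N₂ with hNdef
  have hN₁0 : 0 ≤ N₁ := Real.sqrt_nonneg _
  have hN₂0 : 0 ≤ N₂ := Real.sqrt_nonneg _
  have hN0 : 0 ≤ N := by positivity
  -- FTC for q
  have hqint : ∀ u v : ℝ, q v - q u = ∫ s in u..v, (f₂ s - f₁ s) := by
    intro u v
    rw [intervalIntegral.integral_deriv_eq_sub' q hderivq
      (fun s _ => (hdq₂ s).sub (hdq₁ s)) ((hf₂c.sub hf₁c).continuousOn)]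
  have hint₁ : IntervalIntegrable (fun u => f₁ u ^ 2) volume a b :=
    (hf₁c.pow 2).intervalIntegrable _ _
  have hint₂ : IntervalIntegrable (fun u => f₂ u ^ 2) volume a b :=
    (hf₂c.pow 2).intervalIntegrable _ _
  -- the key estimate |q v - q u| ≤ √(v-u) N
  have qest : ∀ u v : ℝ, a ≤ u → u ≤ v → v ≤ b → |q v - q u| ≤ Real.sqrt (v - u) * N := by
    intro u v hau huv hvb
    rw [hqint u v]
    have step1 : |∫ s in u..v, (f₂ s - f₁ s)| ≤ ∫ s in u..v, |f₂ s - f₁ s| :=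
      intervalIntegral.abs_integral_le_integral_abs huv
    have step2 : (∫ s in u..v, |f₂ s - f₁ s|) ≤ ∫ s in u..v, (|f₁ s| + |f₂ s|) := by
      apply intervalIntegral.integral_mono_on huv
        ((hf₂c.sub hf₁c).abs.intervalIntegrable _ _)
        ((hf₁c.abs.add hf₂c.abs).intervalIntegrable _ _)
      intro s _
      show |f₂ s - f₁ s| ≤ |f₁ s| + |f₂ s|
      rw [abs_sub_comm]
      exact abs_sub _ _
    have step3 : (∫ s in u..v, (|f₁ s| + |f₂ s|))
        = (∫ s in u..v, |f₁ s|) + ∫ s in u..v, |f₂ s| :=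
      intervalIntegral.integral_add (hf₁c.abs.intervalIntegrable _ _)
        (hf₂c.abs.intervalIntegrable _ _)
    have step4₁ := my_cs hf₁c huv
    have step4₂ := my_cs hf₂c huv
    have step5₁ : Real.sqrt (∫ s in u..v, f₁ s ^ 2) ≤ N₁ := by
      apply Real.sqrt_le_sqrt
      exact intervalIntegral.integral_mono_interval hau huv hvb
        (Filter.Eventually.of_forall (fun s => sq_nonneg _)) hint₁
    have step5₂ : Real.sqrt (∫ s in u..v, f₂ s ^ 2) ≤ N₂ := by
      apply Real.sqrt_le_sqrt
      exact intervalIntegral.integral_mono_interval hau huv hvb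
        (Filter.Eventually.of_forall (fun s => sq_nonneg _)) hint₂
    have hs0 : 0 ≤ Real.sqrt (v - u) := Real.sqrt_nonneg _
    calc |∫ s in u..v, (f₂ s - f₁ s)| ≤ (∫ s in u..v, |f₁ s|) + ∫ s in u..v, |f₂ s| := by
          rw [← step3]; exact step1.trans step2
    _ ≤ Real.sqrt (v-u) * Real.sqrt (∫ s in u..v, f₁ s ^ 2)
        + Real.sqrt (v-u) * Real.sqrt (∫ s in u..v, f₂ s ^ 2) := add_le_add step4₁ step4₂
    _ ≤ Real.sqrt (v-u) * N₁ + Real.sqrt (v-u) * N₂ :=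
        add_le_add (mul_le_mul_of_nonneg_left step5₁ hs0) (mul_le_mul_of_nonneg_left step5₂ hs0)
    _ = Real.sqrt (v-u) * N := by rw [hNdef]; ring

  -- element k affine data
  obtain ⟨c, d, hcd⟩ := hPaff k hkn'
  obtain ⟨c₂, d₂, hc₂d⟩ := hP₂aff k hkn'
  obtain ⟨cQ, dQ, hcQd⟩ := hQaff k hkn'
  have hxkIcc : x k ∈ Icc (x k) (x (k+1)) := ⟨le_rfl, (hxlt k hkn').le⟩
  have hx1Icc : x (k+1) ∈ Icc (x k) (x (k+1)) := ⟨(hxlt k hkn').le, le_rfl⟩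
  have E1 : c * x k + d = p₁ (x k) := by
    rw [← hcd _ hxkIcc, hP k (by omega), if_pos hkα]
  have E2 : c * x (k+1) + d = p₂ (x (k+1)) := by
    rw [← hcd _ hx1Icc, hP (k+1) hkn, if_neg (not_lt.mpr hαk.le)]
  have E3 : c₂ * x k + d₂ = p₂ (x k) := by
    rw [← hc₂d _ hxkIcc, hP₂ k (by omega)]
  have E4 : c₂ * x (k+1) + d₂ = p₂ (x (k+1)) := by
    rw [← hc₂d _ hx1Icc, hP₂ (k+1) hkn]
  have E5 : cQ * x k + dQ = q (x k) := by
    rw [← hcQd _ hxkIcc, hQ k (by omega)]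
  have E6 : cQ * x (k+1) + dQ = q (x (k+1)) := by
    rw [← hcQd _ hx1Icc, hQ (k+1) hkn]
  -- FTC for p₂ - p₁
  set R := ∫ u in (x k)..α, q u with hRdef
  have hftc : R = (p₂ α - p₁ α) - (p₂ (x k) - p₁ (x k)) := by
    rw [hRdef]
    have hd : deriv (fun u => p₂ u - p₁ u) = q :=
      funext fun s => deriv_sub ((hp₂.differentiable two_ne_zero) s)
        ((hp₁.differentiable two_ne_zero) s)
    exact intervalIntegral.integral_deriv_eq_sub' _ hd
      (fun s _ => ((hp₂.differentiable two_ne_zero) s).sub ((hp₁.differentiable two_ne_zero) s))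
      hqc.continuousOn
  have hqα : q α = deriv p₂ α - deriv p₁ α := rfl
  have hJk : p₂ (x k) - p₁ (x k) = γ * q α - R := by
    rw [hqα, ← hjump]; linarith
  have hcc : (c₂ - c) * (x (k+1) - x k) = -(p₂ (x k) - p₁ (x k)) := by
    linear_combination E4 - E3 - E2 + E1
  -- nonzero denominators
  have hknz : x (k+1) - x k ≠ 0 := ne_of_gt hkpos
  have hAnz : α - x (k+1) ≠ 0 := ne_of_lt (sub_neg.mpr hαk)
  have hAgnz : α - x (k+1) - γ ≠ 0 := ne_of_lt (by linarith)
  -- the explicit derivative polynomial on (α, x (k+1))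
  set Fd : ℝ → ℝ :=
    fun t => c₂ - (c + (cQ*(m₂*(t - x (k+1))) + ((cQ*t + dQ) + δ)*m₂)) with hFddef
  have hFdc : Continuous Fd := by
    apply continuous_const.sub
    apply continuous_const.add
    apply Continuous.add
    · exact continuous_const.mul (continuous_const.mul (continuous_id.sub continuous_const))
    · exact (((continuous_const.mul continuous_id).add continuous_const).add
        continuous_const).mul continuous_const
  have hm₂v : m₂ = (α - x k - γ) * (α - x (k+1)) / ((x (k+1) - x k) * (α - x (k+1) - γ)) := rfl
  have hδv : δ = -(γ * q α) / (α - x (k+1)) := by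
    show -(p₂ α - p₁ α) / (α - x (k + 1)) = _
    rw [hjump, hqα]
  have hkey : ∀ t : ℝ, Fd t = (R - (α - x k)*(q α))/(x (k+1) - x k)
      - m₂*((q (x k) - q α) + cQ*(t - x k) + cQ*(t - x (k+1))) := by
    intro t
    exact key_alg γ (x k) (x (k+1)) α t c c₂ cQ dQ δ m₂ (q (x k)) (q α) R
      (p₂ (x k) - p₁ (x k)) hknz hAnz hAgnz hm₂v hδv hcc hJk E5
  -- derivative on (α, x (k+1))
  have hderiv1 : ∀ t ∈ Ioo α (x (k+1)), deriv (fun s => Ibar s - Ih s) t = Fd t := by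
    intro t ht
    have hev : (fun s => Ibar s - Ih s) =ᶠ[nhds t]
        (fun s => (c₂*s + d₂) - ((c*s + d) + ((cQ*s + dQ) + δ) * (m₂ * (s - x (k+1))))) := by
      filter_upwards [Ioo_mem_nhds ht.1 ht.2] with s hs
      have hx0s : x k < s := lt_trans hkα hs.1
      have hsx1 : s ≤ x (k+1) := hs.2.le
      have hsIcc : s ∈ Icc (x k) (x (k+1)) := ⟨hx0s.le, hsx1⟩
      have hψs : ψ s = m₂ * (s - x (k+1)) := by
        show (if s < x k then (0:ℝ) else if s < α then m₁ * (s - x k)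
          else if s ≤ x (k+1) then m₂ * (s - x (k+1)) else 0) = _
        rw [if_neg (not_lt.mpr hx0s.le), if_neg (not_lt.mpr hs.1.le), if_pos hsx1]
      show (if s < α then P₁ s else P₂ s) - (P s + (Q s + δ) * ψ s) = _
      rw [if_neg (not_lt.mpr hs.1.le), hψs, hc₂d s hsIcc, hcd s hsIcc, hcQd s hsIcc]
    rw [hev.deriv_eq]
    have h1 : HasDerivAt (fun s : ℝ => c₂*s + d₂) c₂ t := by
      simpa using ((hasDerivAt_id t).const_mul c₂).add_const d₂
    have h2 : HasDerivAt (fun s : ℝ => c*s + d) c t := by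
      simpa using ((hasDerivAt_id t).const_mul c).add_const d
    have h3 : HasDerivAt (fun s : ℝ => (cQ*s + dQ) + δ) cQ t := by
      simpa using (((hasDerivAt_id t).const_mul cQ).add_const dQ).add_const δ
    have h4 : HasDerivAt (fun s : ℝ => m₂*(s - x (k+1))) m₂ t := by
      simpa using ((hasDerivAt_id t).sub_const (x (k+1))).const_mul m₂
    have h5 := h3.mul h4
    have h6 := h1.sub (h2.add h5)
    exact h6.deriv

  -- derivative vanishes on (x (k+1), b)
  have hderiv2 : ∀ t ∈ Ioo (x (k+1)) b, deriv (fun s => Ibar s - Ih s) t = 0 := by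
    intro t ht
    have hx1ltb : x (k+1) < b := lt_trans ht.1 ht.2
    have hne : k + 1 < n := by
      rcases Nat.lt_or_ge (k+1) n with hlt | hge
      · exact hlt
      · exfalso
        have heq : k + 1 = n := by omega
        rw [heq, hxn] at hx1ltb
        linarith
    have hev : (fun s => Ibar s - Ih s) =ᶠ[nhds t] (fun _ => (0:ℝ)) := by
      filter_upwards [Ioo_mem_nhds ht.1 ht.2] with s hs
      have hαs : α < s := lt_trans hαk hs.1
      have hψs : ψ s = 0 := by
        show (if s < x k then (0:ℝ) else if s < α then m₁ * (s - x k)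
          else if s ≤ x (k+1) then m₂ * (s - x (k+1)) else 0) = 0
        rw [if_neg (not_lt.mpr (le_trans (hxlt k hkn').le hs.1.le)),
          if_neg (not_lt.mpr hαs.le), if_neg (not_le.mpr hs.1)]
      obtain ⟨i, hi1, hi2, hi3, hi4⟩ := my_cover x (n - (k+1)) n (k+1) (by omega) hne hxlt s
        hs.1.le (by rw [hxn]; exact hs.2.le)
      obtain ⟨ci, di, hci⟩ := hPaff i hi2
      obtain ⟨ci', di', hci'⟩ := hP₂aff i hi2
      have hα_le_xi : α ≤ x i := le_trans hαk.le (my_mono x n hxlt (k+1) i hi1 (by omega))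
      have hα_le_xi1 : α ≤ x (i+1) := le_trans hα_le_xi (hxlt i hi2).le
      have e1 : ci * x i + di = ci' * x i + di' := by
        rw [← hci (x i) ⟨le_rfl, (hxlt i hi2).le⟩, ← hci' (x i) ⟨le_rfl, (hxlt i hi2).le⟩,
          hP i (by omega), hP₂ i (by omega), if_neg (not_lt.mpr hα_le_xi)]
      have e2 : ci * x (i+1) + di = ci' * x (i+1) + di' := by
        rw [← hci (x (i+1)) ⟨(hxlt i hi2).le, le_rfl⟩, ← hci' (x (i+1)) ⟨(hxlt i hi2).le, le_rfl⟩,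
          hP (i+1) (by omega), hP₂ (i+1) (by omega), if_neg (not_lt.mpr hα_le_xi1)]
      have hPs : P s = P₂ s := by
        rw [hci s ⟨hi3, hi4⟩, hci' s ⟨hi3, hi4⟩]
        exact my_affine_eq (ne_of_lt (hxlt i hi2)) e1 e2 s
      show (if s < α then P₁ s else P₂ s) - (P s + (Q s + δ) * ψ s) = 0
      rw [if_neg (not_lt.mpr hαs.le), hψs, hPs]
      ring
    rw [hev.deriv_eq, deriv_const]
  -- the cutoff function G
  set G : ℝ → ℝ := fun t => if t < x (k+1) then Fd t else 0 with hGdef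
  have hnull : ∀ᵐ t : ℝ, t ≠ x (k+1) ∧ t ≠ b := by
    have h1 : (volume ({x (k+1), b} : Set ℝ)) = 0 :=
      ((Set.finite_singleton b).insert (x (k+1))).measure_zero _
    filter_upwards [measure_eq_zero_iff_ae_notMem.mp h1] with t ht
    simp only [Set.mem_insert_iff, Set.mem_singleton_iff] at ht
    push_neg at ht
    exact ht
  have hstep0 : (∫ t in α..b, (deriv (fun s => Ibar s - Ih s) t)^2)
      = ∫ t in α..b, (G t)^2 := by
    apply intervalIntegral.integral_congr_ae
    filter_upwards [hnull] with t ht hmem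
    rw [Set.uIoc_of_le hαb] at hmem
    rcases lt_or_ge t (x (k+1)) with hlt | hge
    · rw [hderiv1 t ⟨hmem.1, hlt⟩]
      have : G t = Fd t := if_pos hlt
      rw [this]
    · have hgt : x (k+1) < t := lt_of_le_of_ne hge (fun hh => ht.1 hh.symm)
      have htb : t < b := lt_of_le_of_ne hmem.2 ht.2
      rw [hderiv2 t ⟨hgt, htb⟩]
      have : G t = 0 := if_neg (not_lt.mpr hge)
      rw [this]
  have hGi1 : IntervalIntegrable (fun t => (G t)^2) volume α (x (k+1)) := by
    apply ((hFdc.fun_pow 2).intervalIntegrable α (x (k+1))).congr_ae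
    filter_upwards [hnull.filter_mono (ae_mono Measure.restrict_le_self),
      ae_restrict_mem measurableSet_uIoc] with t ht hmem
    rw [Set.uIoc_of_le hαk.le] at hmem
    have hlt : t < x (k+1) := lt_of_le_of_ne hmem.2 ht.1
    have : G t = Fd t := if_pos hlt
    rw [this]
  have hGi2 : IntervalIntegrable (fun t => (G t)^2) volume (x (k+1)) b := by
    apply (_root_.intervalIntegrable_const (c := (0:ℝ))).congr_ae
    filter_upwards [ae_restrict_mem measurableSet_uIoc] with t hmem
    rw [Set.uIoc_of_le hx1b] at hmem
    have : G t = 0 := if_neg (not_lt.mpr hmem.1.le)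
    rw [this]
    norm_num
  have hsplit : (∫ t in α..b, (G t)^2)
      = (∫ t in α..(x (k+1)), (G t)^2) + ∫ t in (x (k+1))..b, (G t)^2 :=
    (intervalIntegral.integral_add_adjacent_intervals hGi1 hGi2).symm
  have hright : (∫ t in (x (k+1))..b, (G t)^2) = 0 := by
    apply intervalIntegral.integral_zero_ae
    filter_upwards with t hmem
    rw [Set.uIoc_of_le hx1b] at hmem
    have : G t = 0 := if_neg (not_lt.mpr hmem.1.le)
    rw [this]
    norm_num
  have hleft : (∫ t in α..(x (k+1)), (G t)^2) = ∫ t in α..(x (k+1)), (Fd t)^2 := by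
    apply intervalIntegral.integral_congr_ae
    filter_upwards [hnull] with t ht hmem
    rw [Set.uIoc_of_le hαk.le] at hmem
    have hlt : t < x (k+1) := lt_of_le_of_ne hmem.2 ht.1
    have : G t = Fd t := if_pos hlt
    rw [this]

  -- bound on m₂
  have hm₂abs : |m₂| ≤ (1+γ)/γ := by
    have h1 : |α - x k - γ| ≤ (x (k+1) - x k) + γ := by
      rw [abs_le]
      constructor <;> [linarith; linarith]
    have h2 : |α - x (k+1)| ≤ x (k+1) - x k := by
      rw [abs_le]
      constructor <;> [linarith; linarith]
    have h3 : |(x (k+1) - x k)*(α - x (k+1) - γ)| = (x (k+1) - x k)*(γ - (α - x (k+1))) := by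
      rw [abs_mul, abs_of_pos hkpos, abs_of_neg (by linarith : α - x (k+1) - γ < 0)]
      ring
    rw [hm₂v, abs_div, abs_mul, h3]
    have hden : (x (k+1) - x k)*γ ≤ (x (k+1) - x k)*(γ - (α - x (k+1))) := by
      have hp : (0:ℝ) ≤ (x (k+1) - x k)*(x (k+1) - α) := mul_nonneg hkpos.le (by linarith)
      nlinarith [hp]
    calc |α - x k - γ| * |α - x (k+1)| / ((x (k+1) - x k)*(γ - (α - x (k+1))))
        ≤ (((x (k+1) - x k) + γ)*(x (k+1) - x k)) / ((x (k+1) - x k)*γ) := by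
          apply div_le_div₀ (by positivity)
            (mul_le_mul h1 h2 (abs_nonneg _) (by linarith)) (by positivity) hden
      _ = ((x (k+1) - x k) + γ)/γ := by
          field_simp
      _ ≤ (1+γ)/γ := by
          gcongr
          linarith

  -- bound on cQ
  have hcQbound : |cQ| * (x (k+1) - x k) ≤ Real.sqrt h * N := by
    have h6 : cQ * (x (k+1) - x k) = q (x (k+1)) - q (x k) := by linear_combination E6 - E5
    have h7 := qest (x k) (x (k+1)) hx0a (hxlt k hkn').le hx1b
    rw [← h6, abs_mul, abs_of_pos hkpos] at h7
    exact h7.trans (mul_le_mul_of_nonneg_right (Real.sqrt_le_sqrt hhk) hN0)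
  -- pointwise bound for q near α
  have hqdiff : ∀ u ∈ Icc (x k) α, |q u - q α| ≤ Real.sqrt h * N := by
    intro u hu
    rw [abs_sub_comm]
    have h8 := qest u α (le_trans hx0a hu.1) hu.2 hαb
    refine h8.trans (mul_le_mul_of_nonneg_right (Real.sqrt_le_sqrt ?_) hN0)
    have := hu.1
    linarith
  -- bound on the integral error term
  have hbE0 : |R - (α - x k)*(q α)| ≤ (α - x k)*(Real.sqrt h * N) := by
    have h7 : R - (α - x k)*(q α) = ∫ u in (x k)..α, (q u - q α) := by
      rw [intervalIntegral.integral_sub (hqc.intervalIntegrable _ _)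
        intervalIntegrable_const, intervalIntegral.integral_const, smul_eq_mul, hRdef]
    rw [h7]
    calc |∫ u in (x k)..α, (q u - q α)| ≤ ∫ u in (x k)..α, |q u - q α| :=
        intervalIntegral.abs_integral_le_integral_abs hkα.le
      _ ≤ ∫ u in (x k)..α, (Real.sqrt h * N) := by
          apply intervalIntegral.integral_mono_on hkα.le
            ((hqc.sub continuous_const).abs.intervalIntegrable _ _)
            intervalIntegrable_const hqdiff
      _ = (α - x k)*(Real.sqrt h * N) := by
          rw [intervalIntegral.integral_const, smul_eq_mul]
  have hsN0 : 0 ≤ Real.sqrt h * N := mul_nonneg (Real.sqrt_nonneg _) hN0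
  have hγ0 : (0:ℝ) ≤ (1+γ)/γ := div_nonneg (by linarith) hγpos.le
  -- pointwise bound on Fd
  have hFdbound : ∀ t ∈ Icc α (x (k+1)),
      |Fd t| ≤ (1 + 3*(1+γ)/γ) * (Real.sqrt h * N) := by
    intro t ht
    have b1 : |(R - (α - x k)*(q α))/(x (k+1) - x k)| ≤ Real.sqrt h * N := by
      rw [abs_div, abs_of_pos hkpos, div_le_iff₀ hkpos]
      refine hbE0.trans ?_
      have h9 : α - x k ≤ x (k+1) - x k := by linarith
      nlinarith [hsN0]
    have b2 : |q (x k) - q α| ≤ Real.sqrt h * N := hqdiff (x k) ⟨le_rfl, hkα.le⟩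
    have b3 : |cQ*(t - x k)| ≤ Real.sqrt h * N := by
      rw [abs_mul]
      have h10 : |t - x k| ≤ x (k+1) - x k := by
        rw [abs_le]
        constructor
        · linarith [ht.1]
        · linarith [ht.2]
      calc |cQ| * |t - x k| ≤ |cQ| *(x (k+1) - x k) :=
          mul_le_mul_of_nonneg_left h10 (abs_nonneg _)
        _ ≤ Real.sqrt h * N := hcQbound
    have b4 : |cQ*(t - x (k+1))| ≤ Real.sqrt h * N := by
      rw [abs_mul]
      have h10 : |t - x (k+1)| ≤ x (k+1) - x k := by
        rw [abs_le]
        constructor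
        · linarith [ht.1]
        · linarith [ht.2]
      calc |cQ| * |t - x (k+1)| ≤ |cQ| *(x (k+1) - x k) :=
          mul_le_mul_of_nonneg_left h10 (abs_nonneg _)
        _ ≤ Real.sqrt h * N := hcQbound
    have e_bound : |(q (x k) - q α) + cQ*(t - x k) + cQ*(t - x (k+1))|
        ≤ 3*(Real.sqrt h * N) := by
      calc |(q (x k) - q α) + cQ*(t - x k) + cQ*(t - x (k+1))|
          ≤ |(q (x k) - q α) + cQ*(t - x k)| + |cQ*(t - x (k+1))| := abs_add_le _ _
        _ ≤ (|q (x k) - q α| + |cQ*(t - x k)|) + |cQ*(t - x (k+1))| :=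
            add_le_add_left (abs_add_le _ _) _
        _ ≤ 3*(Real.sqrt h * N) := by linarith
    rw [hkey t]
    calc |(R - (α - x k)*(q α))/(x (k+1) - x k)
        - m₂*((q (x k) - q α) + cQ*(t - x k) + cQ*(t - x (k+1)))|
        ≤ |(R - (α - x k)*(q α))/(x (k+1) - x k)|
          + |m₂*((q (x k) - q α) + cQ*(t - x k) + cQ*(t - x (k+1)))| := abs_sub _ _
      _ = |(R - (α - x k)*(q α))/(x (k+1) - x k)|
          + |m₂| * |(q (x k) - q α) + cQ*(t - x k) + cQ*(t - x (k+1))| := by rw [abs_mul]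
      _ ≤ Real.sqrt h * N + ((1+γ)/γ)*(3*(Real.sqrt h * N)) :=
          add_le_add b1 (mul_le_mul hm₂abs e_bound (abs_nonneg _) hγ0)
      _ = (1 + 3*(1+γ)/γ) * (Real.sqrt h * N) := by ring
  -- integral bound
  have hMval : 0 ≤ (1 + 3*(1+γ)/γ) * (Real.sqrt h * N) := by positivity
  have hIb : (∫ t in α..(x (k+1)), (Fd t)^2) ≤ ((1 + 3*(1+γ)/γ)*h*N)^2 := by
    calc (∫ t in α..(x (k+1)), (Fd t)^2)
        ≤ ∫ _t in α..(x (k+1)), ((1 + 3*(1+γ)/γ) * (Real.sqrt h * N))^2 := by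
          apply intervalIntegral.integral_mono_on hαk.le
            ((hFdc.pow 2).intervalIntegrable _ _) intervalIntegrable_const
          intro t ht
          have := hFdbound t ht
          calc (Fd t)^2 = |Fd t|^2 := (sq_abs _).symm
            _ ≤ ((1 + 3*(1+γ)/γ) * (Real.sqrt h * N))^2 :=
              pow_le_pow_left₀ (abs_nonneg _) this 2
      _ = (x (k+1) - α) * ((1 + 3*(1+γ)/γ) * (Real.sqrt h * N))^2 := by
          rw [intervalIntegral.integral_const, smul_eq_mul]
      _ ≤ h * ((1 + 3*(1+γ)/γ) * (Real.sqrt h * N))^2 :=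
          mul_le_mul_of_nonneg_right (by linarith) (sq_nonneg _)
      _ = ((1 + 3*(1+γ)/γ)*h*N)^2 := by
          rw [mul_pow, mul_pow, Real.sq_sqrt hh0.le]
          ring
  -- conclusion
  rw [hstep0, hsplit, hright, hleft, add_zero]
  have hfin : Real.sqrt (∫ t in α..(x (k+1)), (Fd t)^2) ≤ (1 + 3*(1+γ)/γ)*h*N := by
    have := Real.sqrt_le_sqrt hIb
    rwa [Real.sqrt_sq (by positivity)] at this
  calc Real.sqrt (∫ t in α..(x (k+1)), (Fd t)^2) ≤ (1 + 3*(1+γ)/γ)*h*N := hfin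
    _ = (1 + 3*(1+γ)/γ)*h*(N₁ + N₂) := by rw [hNdef]
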